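/- Averaging the per-point bound: under the assumptions of the previous estimate and additionally ∑_i D_{i,σ₁(i)} ≤ nδ₁, ∑_i D_{i,σ₂(i)} ≤ nδ₂ for the squared distance matrix D of points in a metric space, one has (1/n) ∑_{i=1}^n |r̂_i − r_i| ≤ (3/2)(δ₁ + δ₂) + (3/2)ε. -/
import Mathlib


open Finset

theorem noise_magnitude_average_error {T : Type*} [MetricSpace T] (n : ℕ) (hn : 0 < n)
    (x : Fin n → T) (r : Fin n → ℝ) (e Dt : Fin n → Fin n → ℝ) (ε δ₁ δ₂ : ℝ)
    (σ₁ σ₂ : Equiv.Perm (Fin n))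
    (h₁ : ∀ i, σ₁ i ≠ i) (h₂ : ∀ i, σ₂ i ≠ i) (h₁₂ : ∀ i, σ₂ i ≠ σ₁ i)
    (hD : ∀ i j, i ≠ j → Dt i j = dist (x i) (x j) ^ 2 + r i + r j + e i j)
    (he : ∀ i j, i ≠ j → |e i j| ≤ ε)
    (hδ₁ : ∑ i, dist (x i) (x (σ₁ i)) ^ 2 ≤ (n : ℝ) * δ₁)
    (hδ₂ : ∑ i, dist (x i) (x (σ₂ i)) ^ 2 ≤ (n : ℝ) * δ₂)
    (rh : Fin n → ℝ)
    (hrh : ∀ i, rh i = (1 / 2) * (Dt i (σ₁ i) + Dt i (σ₂ i) - Dt (σ₁ i) (σ₂ i))) :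
    (1 / (n : ℝ)) * ∑ i, |rh i - r i| ≤ (3 / 2) * (δ₁ + δ₂) + (3 / 2) * ε := by
  have key : ∀ i, |rh i - r i| ≤
      (1/2) * (dist (x i) (x (σ₁ i)) ^ 2 + dist (x i) (x (σ₂ i)) ^ 2
        + dist (x (σ₁ i)) (x (σ₂ i)) ^ 2) + (3/2) * ε := by
    intro i
    have e1 := abs_le.mp (he i (σ₁ i) (h₁ i).symm)
    have e2 := abs_le.mp (he i (σ₂ i) (h₂ i).symm)
    have e3 := abs_le.mp (he (σ₁ i) (σ₂ i) (h₁₂ i).symm)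
    have d1 : (0:ℝ) ≤ dist (x i) (x (σ₁ i)) ^ 2 := sq_nonneg _
    have d2 : (0:ℝ) ≤ dist (x i) (x (σ₂ i)) ^ 2 := sq_nonneg _
    have d3 : (0:ℝ) ≤ dist (x (σ₁ i)) (x (σ₂ i)) ^ 2 := sq_nonneg _
    rw [hrh i, hD i (σ₁ i) (h₁ i).symm, hD i (σ₂ i) (h₂ i).symm,
      hD (σ₁ i) (σ₂ i) (h₁₂ i).symm]
    rw [abs_le]
    constructor <;> nlinarith
  have tri : ∀ i, dist (x (σ₁ i)) (x (σ₂ i)) ^ 2 ≤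
      2 * dist (x i) (x (σ₁ i)) ^ 2 + 2 * dist (x i) (x (σ₂ i)) ^ 2 := by
    intro i
    have h := dist_triangle (x (σ₁ i)) (x i) (x (σ₂ i))
    rw [dist_comm (x (σ₁ i)) (x i)] at h
    nlinarith [sq_nonneg (dist (x i) (x (σ₁ i)) - dist (x i) (x (σ₂ i))),
      dist_nonneg (x := x (σ₁ i)) (y := x (σ₂ i)),
      dist_nonneg (x := x i) (y := x (σ₁ i)), dist_nonneg (x := x i) (y := x (σ₂ i))]
  have hc : ∑ i, dist (x (σ₁ i)) (x (σ₂ i)) ^ 2 ≤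
      2 * ∑ i, dist (x i) (x (σ₁ i)) ^ 2 + 2 * ∑ i, dist (x i) (x (σ₂ i)) ^ 2 := by
    calc ∑ i, dist (x (σ₁ i)) (x (σ₂ i)) ^ 2
        ≤ ∑ i, (2 * dist (x i) (x (σ₁ i)) ^ 2 + 2 * dist (x i) (x (σ₂ i)) ^ 2) :=
          Finset.sum_le_sum fun i _ => tri i
      _ = _ := by rw [Finset.sum_add_distrib, ← Finset.mul_sum, ← Finset.mul_sum]
  have hsum : ∑ i, |rh i - r i| ≤
      (n : ℝ) * ((3/2) * (δ₁ + δ₂) + (3/2) * ε) := by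
    calc ∑ i, |rh i - r i|
        ≤ ∑ i, ((1/2) * (dist (x i) (x (σ₁ i)) ^ 2 + dist (x i) (x (σ₂ i)) ^ 2
            + dist (x (σ₁ i)) (x (σ₂ i)) ^ 2) + (3/2) * ε) :=
          Finset.sum_le_sum fun i _ => key i
      _ = (1/2) * (∑ i, dist (x i) (x (σ₁ i)) ^ 2 + ∑ i, dist (x i) (x (σ₂ i)) ^ 2
            + ∑ i, dist (x (σ₁ i)) (x (σ₂ i)) ^ 2) + (n : ℝ) * ((3/2) * ε) := by
          rw [Finset.sum_add_distrib, ← Finset.mul_sum, Finset.sum_add_distrib,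
            Finset.sum_add_distrib, Finset.sum_const, card_univ, Fintype.card_fin,
            nsmul_eq_mul]
      _ ≤ (n : ℝ) * ((3/2) * (δ₁ + δ₂) + (3/2) * ε) := by nlinarith
  have hnpos : (0:ℝ) < n := by exact_mod_cast hn
  calc (1 / (n : ℝ)) * ∑ i, |rh i - r i|
      ≤ (1 / (n : ℝ)) * ((n : ℝ) * ((3/2) * (δ₁ + δ₂) + (3/2) * ε)) := by
        apply mul_le_mul_of_nonneg_left hsum (by positivity)
    _ = (3/2) * (δ₁ + δ₂) + (3/2) * ε := by field_simp
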